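/- If a partition produced by the algorithm contains every good set X_1,...,X_k in distinct clusters (each cluster containing exactly one whole good set and no points of other good sets), and the optimal clustering C* is ε-close to C_T, and the number of bad points is at most b, then the output clustering is within distance (b/n) + ε of the target clustering C_T. -/

import Mathlib

open Finset

variable {X : Type*} [Fintype X] [DecidableEq X] {k : ℕ}

/-- Misclassification distance between two k-clusterings. -/
noncomputable def clusterDist (C C' : Fin k → Finset X) : ℝ :=
  (Finset.univ.inf' Finset.univ_nonempty
    (fun σ : Equiv.Perm (Fin k) => ∑ i, (((C i) \ (C' (σ i))).card : ℝ))) /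
    (Fintype.card X)

/-- If a partition produced by the algorithm contains every good set
X_i = C_i* \ B in distinct clusters (each cluster containing exactly one whole good
set and no points of other good sets), the optimal clustering C* is ε-close to C_T,
and the number of bad points is at most b, then the output clustering is within
distance (b/n) + ε of the target clustering C_T. -/
theorem stmt_17 (CT Cstar C : Fin k → Finset X)
    (hCT : ∀ x : X, ∃! i : Fin k, x ∈ CT i)
    (hCstar : ∀ x : X, ∃! i : Fin k, x ∈ Cstar i)
    (hC : ∀ x : X, ∃! i : Fin k, x ∈ C i)
    (n : ℕ) (hn : Fintype.card X = n) (hn0 : 0 < n)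
    (ε : ℝ) (hε : 0 < ε)
    (hclose : clusterDist Cstar CT < ε)
    (B : Finset X) (b : ℕ) (hB : B.card ≤ b)
    (σ : Equiv.Perm (Fin k))
    (hgood : ∀ i, (Cstar i) \ B ⊆ C (σ i))
    (hpure : ∀ i j, j ≠ i → Disjoint (C (σ i)) ((Cstar j) \ B)) :
    clusterDist C CT < (b : ℝ) / n + ε := by
  have hnR : (0:ℝ) < n := by exact_mod_cast hn0
  unfold clusterDist at hclose ⊢
  rw [hn] at hclose ⊢
  rw [div_lt_iff₀ hnR] at hclose ⊢
  obtain ⟨τ, -, hτ⟩ := (Finset.inf'_lt_iff _).mp hclose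
  -- key pointwise bound
  have key : ∀ i, ((C (σ i)) \ (CT (τ i))).card ≤
      ((Cstar i) \ (CT (τ i))).card + (B ∩ C (σ i)).card := by
    intro i
    have hsub : (C (σ i)) \ (CT (τ i)) ⊆ ((Cstar i) \ (CT (τ i))) ∪ (B ∩ C (σ i)) := by
      intro x hx
      simp only [mem_sdiff, mem_union, mem_inter] at hx ⊢
      by_cases hxB : x ∈ B
      · exact Or.inr ⟨hxB, hx.1⟩
      · obtain ⟨j, hj, -⟩ := hCstar x
        rcases eq_or_ne j i with rfl | hji
        · exact Or.inl ⟨hj, hx.2⟩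
        · exact (Finset.disjoint_left.mp (hpure i j hji) hx.1 (mem_sdiff.mpr ⟨hj, hxB⟩)).elim
    calc ((C (σ i)) \ (CT (τ i))).card ≤ _ := card_le_card hsub
      _ ≤ _ := card_union_le _ _
  have hBsum : ∑ i, (B ∩ C (σ i)).card ≤ B.card := by
    have hdisj : ((Finset.univ : Finset (Fin k)) : Set (Fin k)).PairwiseDisjoint
        (fun i => B ∩ C (σ i)) := by
      intro i _ j _ hij
      refine Finset.disjoint_left.mpr ?_
      intro x hx hx'
      simp only [mem_inter] at hx hx'
      obtain ⟨m, -, hm⟩ := hC x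
      exact hij (σ.injective ((hm _ hx.2).trans (hm _ hx'.2).symm))
    calc ∑ i, (B ∩ C (σ i)).card
        = (Finset.univ.biUnion (fun i => B ∩ C (σ i))).card :=
          (Finset.card_biUnion hdisj).symm
      _ ≤ B.card := card_le_card (by
          intro x hx
          obtain ⟨i, -, hi⟩ := Finset.mem_biUnion.mp hx
          exact (mem_inter.mp hi).1)
  -- choose permutation σ' = σ.symm.trans τ
  have hle : Finset.univ.inf' Finset.univ_nonempty
      (fun ρ : Equiv.Perm (Fin k) => ∑ i, (((C i) \ (CT (ρ i))).card : ℝ))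
      ≤ ∑ i, (((C (σ i)) \ (CT (τ i))).card : ℝ) := by
    have := Finset.inf'_le
      (fun ρ : Equiv.Perm (Fin k) => ∑ i, (((C i) \ (CT (ρ i))).card : ℝ))
      (Finset.mem_univ (σ.symm.trans τ))
    refine this.trans_eq ?_
    rw [← Equiv.sum_comp σ]
    simp [Equiv.trans]
  refine hle.trans_lt ?_
  have h1 : ∑ i, (((C (σ i)) \ (CT (τ i))).card : ℝ)
      ≤ ∑ i, (((Cstar i) \ (CT (τ i))).card : ℝ) + (b : ℝ) := by
    have : ∑ i, ((C (σ i)) \ (CT (τ i))).card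
        ≤ ∑ i, ((Cstar i) \ (CT (τ i))).card + b := by
      calc ∑ i, ((C (σ i)) \ (CT (τ i))).card
          ≤ ∑ i, (((Cstar i) \ (CT (τ i))).card + (B ∩ C (σ i)).card) :=
            Finset.sum_le_sum (fun i _ => key i)
        _ = ∑ i, ((Cstar i) \ (CT (τ i))).card + ∑ i, (B ∩ C (σ i)).card := by
            rw [Finset.sum_add_distrib]
        _ ≤ _ := by omega
    push_cast
    exact_mod_cast this
  calc ∑ i, (((C (σ i)) \ (CT (τ i))).card : ℝ)
      ≤ ∑ i, (((Cstar i) \ (CT (τ i))).card : ℝ) + (b : ℝ) := h1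
    _ < ε * n + b := by linarith
    _ = ((b:ℝ)/n + ε) * n := by field_simp; ring
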